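/- Let r be a positive integer and let A be an n×n real matrix which is r-diagonal (its (i,j) entry vanishes unless |i − j| < r) and such that A + Aᵀ is negative definite, and let p_1,…,p_{n−1} ≥ 0. Then the associated semidefinite program has an optimal solution M₀ with rank(M₀) ≤ r. -/

import Mathlib

open Matrix

/-- Trace inner product on square matrices: ⟨X, Y⟩ = tr(XY). -/
noncomputable def ip {m : ℕ} (X Y : Matrix (Fin m) (Fin m) ℝ) : ℝ := (X * Y).trace

/-- For an m×m matrix `A`, the symmetric matrix `A_i = e_i a_iᵀ + a_i e_iᵀ`,
whose i-th row and column equal the i-th row of `A` (with (i,i) entry `2 A i i`),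
all other entries zero. -/
noncomputable def sdpMat {m : ℕ} (A : Matrix (Fin m) (Fin m) ℝ) (i : Fin m) :
    Matrix (Fin m) (Fin m) ℝ :=
  Matrix.of fun k l => (if k = i then A i l else 0) + (if l = i then A i k else 0)

/-- Feasibility for the semidefinite program associated to an (n+1)×(n+1) matrix `A`
and data `p`: `M ⪰ 0` and `⟨A_i, M⟩ = -p_i` for every non-final index `i`. -/
def Feasible {n : ℕ} (A : Matrix (Fin (n + 1)) (Fin (n + 1)) ℝ)
    (p : Fin (n + 1) → ℝ) (M : Matrix (Fin (n + 1)) (Fin (n + 1)) ℝ) : Prop :=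
  M.PosSemidef ∧ ∀ i : Fin (n + 1), i ≠ Fin.last n → ip (sdpMat A i) M = -(p i)

section SDPAux
open scoped RealInnerProductSpace


lemma ip_sdpMat {m : ℕ} (A M : Matrix (Fin m) (Fin m) ℝ) (i : Fin m) :
    ip (sdpMat A i) M = ∑ l, A i l * (M l i + M i l) := by
  have h : ip (sdpMat A i) M = ∑ k, ∑ l, (sdpMat A i) k l * M l k := by
    simp [ip, Matrix.trace, Matrix.mul_apply, Matrix.diag]
  rw [h]
  simp only [sdpMat, Matrix.of_apply, add_mul, ite_mul, zero_mul,
    Finset.sum_add_distrib]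
  rw [Finset.sum_comm (f := fun k l => if k = i then A i l * M l k else 0)]
  simp [Finset.sum_ite_eq, Finset.sum_ite_eq', mul_add, Finset.sum_add_distrib]

lemma sum_ip_sdpMat {m : ℕ} (A M : Matrix (Fin m) (Fin m) ℝ) :
    ∑ i, ip (sdpMat A i) M = ((A + Aᵀ) * M).trace := by
  simp only [ip_sdpMat]
  have h : ((A + Aᵀ) * M).trace = ∑ i, ∑ l, (A i l + A l i) * M l i := by
    simp [Matrix.trace, Matrix.mul_apply, Matrix.diag, Matrix.transpose_apply,
      Matrix.add_apply, Matrix.add_mul]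
  rw [h]
  have h2 : ∀ i l : Fin m, A i l * (M l i + M i l) = A i l * M l i + A i l * M i l := by
    intro i l; ring
  simp only [h2, Finset.sum_add_distrib, add_mul]
  congr 1
  rw [Finset.sum_comm]

lemma ip_sdpMat_congr {m r : ℕ} (A M M' : Matrix (Fin m) (Fin m) ℝ)
    (hdiag : ∀ i j : Fin m, A i j ≠ 0 → |(i : ℤ) - (j : ℤ)| < r)
    (hband : ∀ k l : Fin m, |(k : ℤ) - (l : ℤ)| < r → M k l = M' k l) (i : Fin m) :
    ip (sdpMat A i) M = ip (sdpMat A i) M' := by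
  rw [ip_sdpMat, ip_sdpMat]
  refine Finset.sum_congr rfl fun l _ => ?_
  by_cases h : A i l = 0
  · simp [h]
  · have hb := hdiag i l h
    rw [hband l i (by rw [abs_sub_comm]; omega), hband i l hb]


section Quad
variable {m : ℕ} {M : Matrix (Fin m) (Fin m) ℝ}

lemma psd_quad (hM : M.PosSemidef) (x : Fin m → ℝ) :
    0 ≤ ∑ k, ∑ l, x k * (M k l * x l) := by
  have h := (posSemidef_iff_dotProduct_mulVec.mp hM).2 x
  simpa [dotProduct, Matrix.mulVec, Finset.mul_sum] using h

lemma psd_diag_nonneg (hM : M.PosSemidef) (i : Fin m) : 0 ≤ M i i := by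
  have h := psd_quad hM (Pi.single i 1)
  simpa [Pi.single_apply, Finset.sum_ite_eq, Finset.sum_ite_eq'] using h

lemma psd_symm_entry (hM : M.PosSemidef) (i j : Fin m) : M j i = M i j := by
  have h := hM.1
  have := congrFun (congrFun h i) j
  simpa [Matrix.conjTranspose_apply] using this

lemma psd_entry_abs_le_trace (hM : M.PosSemidef) (i j : Fin m) : |M i j| ≤ M.trace := by
  have htrace : M.trace = ∑ l, M l l := rfl
  have htr : ∀ k : Fin m, M k k ≤ M.trace := fun k => by
    rw [htrace]
    exact Finset.single_le_sum (f := fun l => M l l) (fun l _ => psd_diag_nonneg hM l)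
      (Finset.mem_univ k)
  rcases eq_or_ne i j with rfl | hij
  · rw [abs_of_nonneg (psd_diag_nonneg hM i)]; exact htr i
  · have key : ∀ c : ℝ, 0 ≤ M i i + 2 * c * M i j + c ^ 2 * M j j := by
      intro c
      have h := psd_quad hM (fun k => (if k = i then 1 else 0) + (if k = j then c else 0))
      have hexp : (∑ k, ∑ l, ((if k = i then (1:ℝ) else 0) + (if k = j then c else 0)) *
          (M k l * ((if l = i then 1 else 0) + (if l = j then c else 0))))
          = M i i + c * M i j + c * (M j i + c * M j j) := by
        have hptw : ∀ k : Fin m, (∑ l, ((if k = i then (1:ℝ) else 0) + (if k = j then c else 0)) *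
            (M k l * ((if l = i then 1 else 0) + (if l = j then c else 0))))
            = ((if k = i then (1:ℝ) else 0) + (if k = j then c else 0)) * (M k i + M k j * c) := by
          intro k
          rw [← Finset.mul_sum]
          congr 1
          have : ∀ l : Fin m, M k l * ((if l = i then (1:ℝ) else 0) + (if l = j then c else 0))
              = (if l = i then M k l else 0) + (if l = j then M k l * c else 0) := by
            intro l; split_ifs <;> ring
          simp only [this, Finset.sum_add_distrib, Finset.sum_ite_eq', Finset.mem_univ, if_true]
        rw [Finset.sum_congr rfl (fun k _ => hptw k)]
        have : ∀ k : Fin m, ((if k = i then (1:ℝ) else 0) + (if k = j then c else 0)) *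
            (M k i + M k j * c)
            = (if k = i then M k i + M k j * c else 0) + (if k = j then c * (M k i + M k j * c) else 0) := by
          intro k; split_ifs <;> ring
        rw [Finset.sum_congr rfl (fun k _ => this k)]
        simp only [Finset.sum_add_distrib, Finset.sum_ite_eq', Finset.mem_univ, if_true]
        ring
      rw [hexp] at h
      have hji := psd_symm_entry hM i j
      rw [hji] at h; nlinarith [h, sq_nonneg c]
    have h1 := key 1
    have h2 := key (-1)
    have hsum : M i i + M j j ≤ M.trace := by
      rw [htrace]
      have : ({i, j} : Finset (Fin m)) ⊆ Finset.univ := Finset.subset_univ _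
      calc M i i + M j j = ∑ k ∈ ({i, j} : Finset (Fin m)), M k k := by
            rw [Finset.sum_pair hij]
        _ ≤ ∑ l, M l l := Finset.sum_le_sum_of_subset_of_nonneg this
            (fun k _ _ => psd_diag_nonneg hM k)
    rw [abs_le]
    constructor <;> nlinarith
end Quad


section Coercive
variable {n : ℕ}

lemma quad_expand (B : Matrix (Fin (n+1)) (Fin (n+1)) ℝ) (x : Fin (n+1) → ℝ) :
    x ⬝ᵥ B *ᵥ x = ∑ i, ∑ j, x i * (B i j * x j) := by
  simp [dotProduct, Matrix.mulVec, Finset.mul_sum]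

lemma posdef_quad_lower {B : Matrix (Fin (n+1)) (Fin (n+1)) ℝ} (hB : B.PosDef) :
    ∃ ε > 0, ∀ x : Fin (n+1) → ℝ, ε * (∑ i, x i ^ 2) ≤ x ⬝ᵥ B *ᵥ x := by
  set f : (Fin (n+1) → ℝ) → ℝ := fun x => ∑ i, ∑ j, x i * (B i j * x j) with hf
  have hfsmul : ∀ (c : ℝ) (y : Fin (n+1) → ℝ), f (c • y) = c ^ 2 * f y := by
    intro c y
    simp only [hf, Pi.smul_apply, smul_eq_mul, Finset.mul_sum]
    refine Finset.sum_congr rfl fun i _ => Finset.sum_congr rfl fun j _ => by ring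
  set S : Set (Fin (n+1) → ℝ) := {x | ∑ i, x i ^ 2 = 1} with hS
  have hcontsq : Continuous fun x : Fin (n+1) → ℝ => ∑ i, x i ^ 2 :=
    continuous_finset_sum _ fun i _ => (continuous_apply i).pow 2
  have hSclosed : IsClosed S := isClosed_eq hcontsq continuous_const
  have hSbounded : Bornology.IsBounded S := by
    rw [Metric.isBounded_iff_subset_closedBall 0]
    refine ⟨1, fun x hx => ?_⟩
    rw [Metric.mem_closedBall, dist_zero_right]
    rw [pi_norm_le_iff_of_nonneg (by norm_num)]
    intro i
    rw [Real.norm_eq_abs, abs_le]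
    have h1 : x i ^ 2 ≤ 1 := by
      rw [← hx]
      exact Finset.single_le_sum (f := fun j => x j ^ 2) (fun j _ => sq_nonneg _)
        (Finset.mem_univ i)
    constructor <;> nlinarith
  have hScompact : IsCompact S := Metric.isCompact_of_isClosed_isBounded hSclosed hSbounded
  have hSne : S.Nonempty := by
    refine ⟨Pi.single 0 1, ?_⟩
    simp [hS, Pi.single_apply, Finset.sum_ite_eq']
  have hcont : Continuous f := by
    apply continuous_finset_sum
    intro i _
    apply continuous_finset_sum
    intro j _
    exact (continuous_apply i).mul (continuous_const.mul (continuous_apply j))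
  obtain ⟨x₀, hx₀mem, hx₀min⟩ := hScompact.exists_isMinOn hSne hcont.continuousOn
  have hquadf : ∀ x : Fin (n+1) → ℝ, x ⬝ᵥ B *ᵥ x = f x := fun x => quad_expand B x
  have hx₀ : x₀ ≠ 0 := by
    intro h
    rw [hS] at hx₀mem
    simp only [Set.mem_setOf_eq, h] at hx₀mem
    simp at hx₀mem
  have hfx₀pos : 0 < f x₀ := by
    have h := (posDef_iff_dotProduct_mulVec.mp hB).2 hx₀
    rw [show star x₀ = x₀ from funext fun i => rfl, hquadf] at h
    exact h
  refine ⟨f x₀, hfx₀pos, fun x => ?_⟩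
  rcases eq_or_ne x 0 with rfl | hx
  · simp [hquadf, hf]
  · set t : ℝ := Real.sqrt (∑ i, x i ^ 2) with htdef
    have hsumpos : 0 < ∑ i, x i ^ 2 := by
      have : ∃ i, x i ≠ 0 := by
        by_contra h
        push_neg at h
        exact hx (funext h)
      obtain ⟨i, hi⟩ := this
      have h2 : 0 < x i ^ 2 := by positivity
      exact lt_of_lt_of_le h2 (Finset.single_le_sum (f := fun j => x j ^ 2)
        (fun j _ => sq_nonneg _) (Finset.mem_univ i))
    have ht : 0 < t := Real.sqrt_pos.mpr hsumpos
    have ht2 : t ^ 2 = ∑ i, x i ^ 2 := Real.sq_sqrt hsumpos.le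
    set u : Fin (n+1) → ℝ := t⁻¹ • x with hu
    have humem : u ∈ S := by
      rw [hS, Set.mem_setOf_eq]
      have : ∀ i, u i ^ 2 = t⁻¹ ^ 2 * x i ^ 2 := by
        intro i; rw [hu]; simp [Pi.smul_apply]; ring
      rw [Finset.sum_congr rfl fun i _ => this i, ← Finset.mul_sum, ← ht2]
      field_simp
    have hxu : x = t • u := by
      rw [hu, smul_smul, mul_inv_cancel₀ ht.ne', one_smul]
    calc f x₀ * (∑ i, x i ^ 2) = t ^ 2 * f x₀ := by rw [ht2]; ring
      _ ≤ t ^ 2 * f u := by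
          have h2 : f x₀ ≤ f u := hx₀min humem
          nlinarith [sq_nonneg t]
      _ = f (t • u) := (hfsmul t u).symm
      _ = x ⬝ᵥ B *ᵥ x := by rw [← hxu, hquadf]
end Coercive


section TB
variable {n : ℕ}

lemma psd_exists_ct_mul {k : ℕ} {M : Matrix (Fin k) (Fin k) ℝ} (hM : M.PosSemidef) :
    ∃ C : Matrix (Fin k) (Fin k) ℝ, M = Cᴴ * C := by
  open scoped MatrixOrder in
  obtain ⟨B, hB⟩ := CStarAlgebra.nonneg_iff_eq_star_mul_self.mp hM.nonneg
  exact ⟨B, by simpa [Matrix.star_eq_conjTranspose] using hB⟩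

lemma trace_B_mul_ge {B : Matrix (Fin (n+1)) (Fin (n+1)) ℝ} {ε : ℝ}
    (hquad : ∀ x : Fin (n+1) → ℝ, ε * (∑ i, x i ^ 2) ≤ x ⬝ᵥ B *ᵥ x)
    {M : Matrix (Fin (n+1)) (Fin (n+1)) ℝ} (hM : M.PosSemidef) :
    ε * M.trace ≤ (B * M).trace := by
  obtain ⟨C, hC⟩ := psd_exists_ct_mul hM
  have hCH : ∀ j k, Cᴴ j k = C k j := fun j k => by
    simp [Matrix.conjTranspose_apply]
  have h1 : (B * M).trace = ∑ k, (C k) ⬝ᵥ B *ᵥ (C k) := by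
    rw [hC, ← mul_assoc, Matrix.trace_mul_cycle]
    simp only [Matrix.trace, Matrix.diag, Matrix.mul_apply, dotProduct,
      Matrix.mulVec, hCH]
    refine Finset.sum_congr rfl fun k _ => ?_
    simp only [Finset.sum_mul, Finset.mul_sum]
    rw [Finset.sum_comm]
    exact Finset.sum_congr rfl fun a _ => Finset.sum_congr rfl fun b _ => by ring
  have h2 : M.trace = ∑ k, ∑ i, C k i ^ 2 := by
    rw [hC]
    simp only [Matrix.trace, Matrix.diag, Matrix.mul_apply, hCH]
    rw [Finset.sum_comm]
    refine Finset.sum_congr rfl fun k _ => Finset.sum_congr rfl fun i _ => by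
      rw [sq]
  rw [h1, h2, Finset.mul_sum]
  exact Finset.sum_le_sum fun k _ => hquad (C k)
end TB


section Closed
variable {m : ℕ}

lemma ip_expand (X M : Matrix (Fin m) (Fin m) ℝ) :
    ip X M = ∑ k, ∑ l, X k l * M l k := by
  simp [ip, Matrix.trace, Matrix.mul_apply, Matrix.diag]

lemma continuous_entry (k l : Fin m) :
    Continuous fun M : Matrix (Fin m) (Fin m) ℝ => M k l :=
  (continuous_apply l).comp (continuous_apply k)

lemma continuous_ip (X : Matrix (Fin m) (Fin m) ℝ) :
    Continuous fun M : Matrix (Fin m) (Fin m) ℝ => ip X M := by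
  simp only [ip_expand]
  exact continuous_finset_sum _ fun k _ => continuous_finset_sum _ fun l _ =>
    continuous_const.mul (continuous_entry l k)

lemma continuous_traceB (B : Matrix (Fin m) (Fin m) ℝ) :
    Continuous fun M : Matrix (Fin m) (Fin m) ℝ => (B * M).trace := continuous_ip B

lemma isClosed_posSemidef :
    IsClosed {M : Matrix (Fin m) (Fin m) ℝ | M.PosSemidef} := by
  have hset : {M : Matrix (Fin m) (Fin m) ℝ | M.PosSemidef} =
      (⋂ k, ⋂ l, {M : Matrix (Fin m) (Fin m) ℝ | M k l = M l k}) ∩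
      (⋂ x : Fin m → ℝ, {M : Matrix (Fin m) (Fin m) ℝ | 0 ≤ x ⬝ᵥ M *ᵥ x}) := by
    ext M
    simp only [Set.mem_setOf_eq, Set.mem_inter_iff, Set.mem_iInter]
    constructor
    · intro hM
      refine ⟨fun k l => ?_, fun x => ?_⟩
      · have := congrFun (congrFun hM.1 l) k
        simpa [Matrix.conjTranspose_apply] using this
      · have := (posSemidef_iff_dotProduct_mulVec.mp hM).2 x
        rwa [show star x = x from funext fun i => rfl] at this
    · rintro ⟨h1, h2⟩
      refine posSemidef_iff_dotProduct_mulVec.mpr ⟨?_, fun x => ?_⟩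
      · ext k l
        simpa [Matrix.conjTranspose_apply] using (h1 l k)
      · rw [show star x = x from funext fun i => rfl]
        exact h2 x
  rw [hset]
  refine IsClosed.inter (isClosed_iInter fun k => isClosed_iInter fun l =>
    isClosed_eq (continuous_entry k l) (continuous_entry l k)) (isClosed_iInter fun x => ?_)
  have hc : Continuous fun M : Matrix (Fin m) (Fin m) ℝ => x ⬝ᵥ M *ᵥ x := by
    simp only [dotProduct, Matrix.mulVec]
    exact continuous_finset_sum _ fun k _ => continuous_const.mul
      (continuous_finset_sum _ fun l _ => (continuous_entry k l).mul continuous_const)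
  exact isClosed_le continuous_const hc
end Closed

section Min
attribute [local instance] Matrix.normedAddCommGroup Matrix.normedSpace

lemma exists_minimizer {n : ℕ} {B : Matrix (Fin (n+1)) (Fin (n+1)) ℝ} (hB : B.PosDef)
    (F : Set (Matrix (Fin (n+1)) (Fin (n+1)) ℝ)) (hclosed : IsClosed F)
    (hpsd : ∀ M ∈ F, M.PosSemidef) (hne : F.Nonempty) :
    ∃ M₁ ∈ F, ∀ M ∈ F, (B * M₁).trace ≤ (B * M).trace := by
  obtain ⟨ε, hε, hquad⟩ := posdef_quad_lower hB
  obtain ⟨Md, hMd⟩ := hne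
  set c0 := (B * Md).trace with hc0
  set K := F ∩ {M | (B * M).trace ≤ c0} with hK
  have hKne : K.Nonempty := ⟨Md, hMd, by simp [hc0]⟩
  have hKclosed : IsClosed K :=
    hclosed.inter (isClosed_le (continuous_traceB B) continuous_const)
  have hKbounded : Bornology.IsBounded K := by
    rw [Metric.isBounded_iff_subset_closedBall 0]
    refine ⟨max (c0 / ε) 0, fun M hM => ?_⟩
    rw [Metric.mem_closedBall, dist_zero_right]
    have hps := hpsd M hM.1
    have htr : M.trace ≤ c0 / ε := by
      have h1 := trace_B_mul_ge hquad hps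
      have h2 : (B * M).trace ≤ c0 := hM.2
      rw [le_div_iff₀ hε, mul_comm]
      linarith
    refine (Matrix.norm_le_iff (le_max_right _ _)).mpr fun i j => ?_
    rw [Real.norm_eq_abs]
    exact le_trans (psd_entry_abs_le_trace hps i j) (le_trans htr (le_max_left _ _))
  have hKcompact : IsCompact K :=
    Metric.isCompact_of_isClosed_isBounded hKclosed hKbounded
  obtain ⟨M₁, hM₁K, hM₁min⟩ := hKcompact.exists_isMinOn hKne
    (continuous_traceB B).continuousOn
  refine ⟨M₁, hM₁K.1, fun M hMF => ?_⟩
  by_cases h : (B * M).trace ≤ c0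
  · exact hM₁min ⟨hMF, h⟩
  · exact le_trans (hM₁K.2) (le_of_not_ge h)
end Min


section Gram
variable {r s : ℕ}

lemma euclid_inner_apply {N : ℕ} (x y : EuclideanSpace ℝ (Fin N)) :
    ⟪x, y⟫ = ∑ k, x k * y k := by
  simp [PiLp.inner_apply, RCLike.inner_apply, mul_comm]

lemma gram_extend (hs : s < r) (u : Fin s → EuclideanSpace ℝ (Fin r))
    (G : Matrix (Fin (s+1)) (Fin (s+1)) ℝ) (hG : G.PosSemidef)
    (hGu : ∀ i j : Fin s, G i.castSucc j.castSucc = ⟪u i, u j⟫) :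
    ∃ x : EuclideanSpace ℝ (Fin r),
      (∀ i : Fin s, ⟪u i, x⟫ = G i.castSucc (Fin.last s)) ∧
      ⟪x, x⟫ = G (Fin.last s) (Fin.last s) := by
  classical
  obtain ⟨C, hC⟩ := psd_exists_ct_mul hG
  set F := EuclideanSpace ℝ (Fin (s+1))
  set w : Fin (s+1) → F := fun j => (WithLp.equiv 2 (Fin (s+1) → ℝ)).symm (fun k => C k j)
    with hwdef
  have hw : ∀ i j : Fin (s+1), ⟪w i, w j⟫ = G i j := by
    intro i j
    rw [euclid_inner_apply, hC]
    simp [Matrix.mul_apply, Matrix.conjTranspose_apply, hwdef]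
  set S : Submodule ℝ F := Submodule.span ℝ (Set.range fun i : Fin s => w i.castSucc)
    with hSdef
  have hwS : ∀ i : Fin s, w i.castSucc ∈ S :=
    fun i => Submodule.subset_span ⟨i, rfl⟩
  set y : F := (S.orthogonalProjectionOnto (w (Fin.last s)) : F) with hydef
  have hyS : y ∈ S := (S.orthogonalProjectionOnto (w (Fin.last s))).2
  set z : F := w (Fin.last s) - y with hzdef
  have hz : z ∈ Sᗮ := Submodule.sub_starProjection_mem_orthogonal (K := S) _
  obtain ⟨c, hc⟩ := (Submodule.mem_span_range_iff_exists_fun ℝ).mp hyS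
  -- the vector x₀ in the span of the `u i`
  set x₀ : EuclideanSpace ℝ (Fin r) := ∑ i, c i • u i with hx₀def
  set U : Submodule ℝ (EuclideanSpace ℝ (Fin r)) := Submodule.span ℝ (Set.range u) with hUdef
  have huU : ∀ i, u i ∈ U := fun i => Submodule.subset_span ⟨i, rfl⟩
  have hx₀U : x₀ ∈ U := Submodule.sum_mem _ fun i _ => Submodule.smul_mem _ _ (huU i)
  -- a unit-ish vector orthogonal to U
  have hUfr : Module.finrank ℝ U ≤ s := by
    have := finrank_range_le_card (R := ℝ) u
    simpa [Set.finrank, hUdef] using this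
  have hUorth : Uᗮ ≠ ⊥ := by
    intro h
    have h1 := Submodule.finrank_add_finrank_orthogonal U
    rw [h, finrank_bot] at h1
    rw [finrank_euclideanSpace_fin] at h1
    omega
  obtain ⟨e, heU, hene⟩ := Submodule.exists_mem_ne_zero_of_ne_bot hUorth
  -- key computations
  have hinner_u_x₀ : ∀ i : Fin s, ⟪u i, x₀⟫ = G i.castSucc (Fin.last s) := by
    intro i
    rw [hx₀def, inner_sum]
    have h1 : ∀ j : Fin s, ⟪u i, c j • u j⟫ = c j * ⟪w i.castSucc, w j.castSucc⟫ := by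
      intro j
      rw [real_inner_smul_right, ← hGu, hw]
    rw [Finset.sum_congr rfl fun j _ => h1 j]
    have h2 : ∑ j, c j * ⟪w i.castSucc, w j.castSucc⟫ = ⟪w i.castSucc, y⟫ := by
      rw [← hc, inner_sum]
      exact Finset.sum_congr rfl fun j _ => (real_inner_smul_right _ _ _).symm
    rw [h2]
    have h3 : ⟪w i.castSucc, z⟫ = 0 :=
      Submodule.inner_right_of_mem_orthogonal (hwS i) hz
    have h4 : ⟪w i.castSucc, w (Fin.last s)⟫ = ⟪w i.castSucc, y⟫ + ⟪w i.castSucc, z⟫ := by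
      rw [hzdef, inner_sub_right]; ring
    rw [← hw i.castSucc (Fin.last s), h4, h3, add_zero]
  have hx₀x₀ : ⟪x₀, x₀⟫ = ⟪y, y⟫ := by
    rw [hx₀def, ← hc]
    rw [sum_inner, sum_inner]
    refine Finset.sum_congr rfl fun i _ => ?_
    rw [inner_sum, inner_sum]
    refine Finset.sum_congr rfl fun j _ => ?_
    rw [real_inner_smul_left, real_inner_smul_left, real_inner_smul_right,
      real_inner_smul_right, ← hGu, hw]
  have hwlast : ⟪w (Fin.last s), w (Fin.last s)⟫ = ⟪y, y⟫ + ⟪z, z⟫ := by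
    have hwyz : w (Fin.last s) = y + z := by rw [hzdef]; abel
    have hyz : ⟪y, z⟫ = 0 := Submodule.inner_right_of_mem_orthogonal hyS hz
    rw [hwyz, real_inner_add_add_self, hyz]
    ring
  -- assemble x
  set t : ℝ := Real.sqrt ⟪z, z⟫ / ‖e‖ with htdef
  refine ⟨x₀ + t • e, fun i => ?_, ?_⟩
  · rw [inner_add_right, real_inner_smul_right,
      Submodule.inner_right_of_mem_orthogonal (huU i) heU, mul_zero, add_zero]
    exact hinner_u_x₀ i
  · have hee : ⟪e, e⟫ = ‖e‖ ^ 2 := real_inner_self_eq_norm_sq e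
    have henorm : ‖e‖ ≠ 0 := norm_ne_zero_iff.mpr hene
    have hzz : 0 ≤ ⟪z, z⟫ := real_inner_self_nonneg
    have h0 : ⟪x₀, t • e⟫ = 0 := by
      rw [real_inner_smul_right, Submodule.inner_right_of_mem_orthogonal hx₀U heU, mul_zero]
    have h1 : Real.sqrt ⟪z, z⟫ * Real.sqrt ⟪z, z⟫ = ⟪z, z⟫ := Real.mul_self_sqrt hzz
    have h2 : t * (t * ⟪e, e⟫) = (Real.sqrt ⟪z, z⟫ * Real.sqrt ⟪z, z⟫) *
        ((‖e‖ * ‖e‖) / (‖e‖ * ‖e‖)) := by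
      rw [hee, htdef]; ring
    have hte : ⟪t • e, t • e⟫ = ⟪z, z⟫ := by
      rw [real_inner_smul_right, real_inner_smul_left, h2, h1,
        div_self (by positivity : (‖e‖ * ‖e‖ : ℝ) ≠ 0), mul_one]
    rw [real_inner_add_add_self, h0, hte, hx₀x₀, ← hw (Fin.last s) (Fin.last s), hwlast]
    ring
end Gram

section Band
variable {m r : ℕ}

lemma psd_symm_entry' {M : Matrix (Fin m) (Fin m) ℝ} (hM : M.PosSemidef) (i j : Fin m) :
    M j i = M i j := by
  have := congrFun (congrFun hM.1 i) j
  simpa [Matrix.conjTranspose_apply] using this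

lemma band_completion (hr : 0 < r) (M : Matrix (Fin m) (Fin m) ℝ) (hM : M.PosSemidef) :
    ∃ v : Fin m → EuclideanSpace ℝ (Fin r),
      ∀ k l : Fin m, |(k : ℤ) - (l : ℤ)| < r → ⟪v k, v l⟫ = M k l := by
  classical
  have key : ∀ T : ℕ, ∃ v : Fin m → EuclideanSpace ℝ (Fin r),
      ∀ k l : Fin m, (k : ℕ) < T → (l : ℕ) < T → |(k : ℤ) - (l : ℤ)| < r →
        ⟪v k, v l⟫ = M k l := by
    intro T
    induction T with
    | zero => exact ⟨0, fun k l hk _ _ => absurd hk (by omega)⟩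
    | succ t ih =>
      obtain ⟨v, hv⟩ := ih
      by_cases htm : t < m
      · set τ : Fin m := ⟨t, htm⟩ with hτ
        set s : ℕ := min t (r - 1) with hsdef
        have hs_lt : s < r := by omega
        have hst : s ≤ t := by omega
        have hidx : ∀ a : Fin (s+1), t - s + (a : ℕ) < m := by
          intro a
          have := a.isLt
          omega
        set g : Fin (s+1) → Fin m := fun a => ⟨t - s + a, hidx a⟩ with hg
        set u : Fin s → EuclideanSpace ℝ (Fin r) := fun a => v (g a.castSucc) with hu
        set G : Matrix (Fin (s+1)) (Fin (s+1)) ℝ := M.submatrix g g with hG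
        have hGpsd : G.PosSemidef := hM.submatrix g
        have hgc : ∀ a : Fin (s+1), ((g a : Fin m) : ℕ) = t - s + a := fun a => rfl
        have hGu : ∀ i j : Fin s, G i.castSucc j.castSucc = ⟪u i, u j⟫ := by
          intro i j
          have hi := i.isLt
          have hj := j.isLt
          refine (hv (g i.castSucc) (g j.castSucc) ?_ ?_ ?_).symm
          · rw [hgc]; simp only [Fin.coe_castSucc]; omega
          · rw [hgc]; simp only [Fin.coe_castSucc]; omega
          · rw [abs_sub_lt_iff]
            rw [hgc, hgc]
            simp only [Fin.coe_castSucc]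
            push_cast
            omega
        obtain ⟨x, hx1, hx2⟩ := gram_extend hs_lt u G hGpsd hGu
        have hglast : g (Fin.last s) = τ := by
          apply Fin.ext
          rw [hgc]
          simp only [Fin.val_last, hτ, Fin.val_mk]
          omega
        refine ⟨Function.update v τ x, fun k l hk hl hkl => ?_⟩
        have hwin : ∀ l' : Fin m, (l' : ℕ) < t → |(t : ℤ) - (l' : ℤ)| < r →
            ∃ a : Fin s, g a.castSucc = l' := by
          intro l' hl' habs
          rw [abs_sub_lt_iff] at habs
          refine ⟨⟨(l' : ℕ) - (t - s), by omega⟩, Fin.ext ?_⟩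
          rw [hgc]
          simp only [Fin.coe_castSucc]
          omega
        by_cases hkt : (k : ℕ) = t <;> by_cases hlt : (l : ℕ) = t
        · have hkτ : k = τ := Fin.ext hkt
          have hlτ : l = τ := Fin.ext hlt
          rw [hkτ, hlτ, Function.update_self]
          rw [hx2, hG]
          simp only [Matrix.submatrix_apply]
          rw [hglast]
        · have hkτ : k = τ := Fin.ext hkt
          have hlne : l ≠ τ := fun h => hlt (by rw [h])
          obtain ⟨a, ha⟩ := hwin l (by omega) (by rw [hkτ] at hkl; exact_mod_cast hkl)
          rw [hkτ, Function.update_self, Function.update_of_ne hlne]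
          have := hx1 a
          rw [hG] at this
          simp only [Matrix.submatrix_apply] at this
          rw [hglast, ha] at this
          have h5 : u a = v l := by show v (g a.castSucc) = v l; rw [ha]
          rw [h5] at this
          rw [real_inner_comm, this]
          exact psd_symm_entry' hM τ l
        · have hlτ : l = τ := Fin.ext hlt
          have hkne : k ≠ τ := fun h => hkt (by rw [h])
          obtain ⟨a, ha⟩ := hwin k (by omega) (by rw [hlτ] at hkl; rw [abs_sub_comm] at hkl; exact_mod_cast hkl)
          rw [hlτ, Function.update_self, Function.update_of_ne hkne]
          have := hx1 a
          rw [hG] at this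
          simp only [Matrix.submatrix_apply] at this
          rw [hglast, ha] at this
          have h5 : u a = v k := by show v (g a.castSucc) = v k; rw [ha]
          rw [h5] at this
          exact this
        · have hkne : k ≠ τ := fun h => hkt (by rw [h])
          have hlne : l ≠ τ := fun h => hlt (by rw [h])
          rw [Function.update_of_ne hkne, Function.update_of_ne hlne]
          exact hv k l (by omega) (by omega) hkl
      · exact ⟨v, fun k l hk hl h => hv k l (by have := k.isLt; omega)
          (by have := l.isLt; omega) h⟩
  obtain ⟨v, hv⟩ := key m
  exact ⟨v, fun k l h => hv k l k.isLt l.isLt h⟩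
end Band


lemma euclid_inner_apply' {N : ℕ} (x y : EuclideanSpace ℝ (Fin N)) :
    ⟪x, y⟫ = ∑ k, x k * y k := by
  simp [PiLp.inner_apply, RCLike.inner_apply, mul_comm]

lemma gram_psd_rank {m r : ℕ} (v : Fin m → EuclideanSpace ℝ (Fin r)) :
    ∃ M₀ : Matrix (Fin m) (Fin m) ℝ,
      (∀ k l, M₀ k l = ⟪v k, v l⟫) ∧ M₀.PosSemidef ∧ M₀.rank ≤ r := by
  set V : Matrix (Fin r) (Fin m) ℝ := Matrix.of fun a k => v k a with hV
  refine ⟨Vᴴ * V, fun k l => ?_, Matrix.posSemidef_conjTranspose_mul_self V, ?_⟩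
  · rw [Matrix.mul_apply, euclid_inner_apply']
    refine Finset.sum_congr rfl fun a _ => ?_
    simp [hV, Matrix.conjTranspose_apply]
  · calc (Vᴴ * V).rank ≤ Vᴴ.rank := Matrix.rank_mul_le_left Vᴴ V
      _ ≤ Fintype.card (Fin r) := Matrix.rank_le_card_width Vᴴ
      _ = r := Fintype.card_fin r

end SDPAux

/-- If `A` is `r`-diagonal (entries vanish unless `|i - j| < r`) and `A + Aᵀ` is negative
definite, then the associated semidefinite program has an optimal solution of rank at
most `r`. -/
theorem sdp_r_diagonal_low_rank_optimal (r n : ℕ) (hr : 0 < r)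
    (A : Matrix (Fin (n + 1)) (Fin (n + 1)) ℝ)
    (hdiag : ∀ i j : Fin (n + 1), A i j ≠ 0 → |(i : ℤ) - (j : ℤ)| < r)
    (hA : (-(A + Aᵀ)).PosDef)
    (p : Fin (n + 1) → ℝ) (hp : ∀ i : Fin (n + 1), i ≠ Fin.last n → 0 ≤ p i) :
    ∃ M₀, Feasible A p M₀ ∧ M₀.rank ≤ r ∧
      ∀ M, Feasible A p M →
        ip (sdpMat A (Fin.last n)) M ≤ ip (sdpMat A (Fin.last n)) M₀ := by
  classical
  -- diagonal entries of A are negative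
  have hAii : ∀ i : Fin (n + 1), A i i < 0 := by
    intro i
    have hne : (Pi.single i 1 : Fin (n + 1) → ℝ) ≠ 0 := by
      intro h
      have := congrFun h i
      simp at this
    have h := (posDef_iff_dotProduct_mulVec.mp hA).2 hne
    rw [show star (Pi.single i 1 : Fin (n + 1) → ℝ) = Pi.single i 1 from
      funext fun _ => rfl] at h
    simp only [dotProduct, Matrix.mulVec, Matrix.neg_apply, Matrix.add_apply,
      Matrix.transpose_apply, Pi.single_apply] at h
    simp only [mul_ite, mul_one, mul_zero, Finset.sum_ite_eq', Finset.mem_univ, if_true,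
      ite_mul, zero_mul, dotProduct] at h
    simp at h
    linarith
  -- the feasible diagonal matrix
  set d : Fin (n + 1) → ℝ :=
    fun i => if i = Fin.last n then 0 else p i / (-(2 * A i i)) with hd
  have hd0 : ∀ i, 0 ≤ d i := by
    intro i
    rw [hd]
    by_cases hi : i = Fin.last n
    · simp [hi]
    · simp only [hi, if_false]
      have h1 := hAii i
      have h2 := hp i hi
      apply div_nonneg h2
      linarith
  have hMdfeas : Feasible A p (Matrix.diagonal d) := by
    constructor
    · exact Matrix.PosSemidef.diagonal hd0
    · intro i hi
      rw [ip_sdpMat]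
      rw [Finset.sum_eq_single i]
      · rw [Matrix.diagonal_apply_eq]
        have hAi : A i i ≠ 0 := (hAii i).ne
        rw [hd]
        simp only [hi, if_false]
        field_simp
        ring
      · intro l _ hl
        rw [Matrix.diagonal_apply_ne _ hl, Matrix.diagonal_apply_ne _ (Ne.symm hl)]
        ring
      · intro h
        exact absurd (Finset.mem_univ i) h
  -- the feasible set is closed
  set F : Set (Matrix (Fin (n + 1)) (Fin (n + 1)) ℝ) := {M | Feasible A p M} with hF
  have hFclosed : IsClosed F := by
    have hFeq : F = {M : Matrix (Fin (n + 1)) (Fin (n + 1)) ℝ | M.PosSemidef} ∩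
        ⋂ i : Fin (n + 1),
          {M : Matrix (Fin (n + 1)) (Fin (n + 1)) ℝ |
            i ≠ Fin.last n → ip (sdpMat A i) M = -(p i)} := by
      ext M
      simp only [hF, Set.mem_setOf_eq, Set.mem_inter_iff, Set.mem_iInter, Feasible]
    rw [hFeq]
    refine isClosed_posSemidef.inter (isClosed_iInter fun i => ?_)
    by_cases hi : i = Fin.last n
    · have : {M : Matrix (Fin (n + 1)) (Fin (n + 1)) ℝ |
          i ≠ Fin.last n → ip (sdpMat A i) M = -(p i)} = Set.univ := by
        ext M
        simp [hi]
      rw [this]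
      exact isClosed_univ
    · have : {M : Matrix (Fin (n + 1)) (Fin (n + 1)) ℝ |
          i ≠ Fin.last n → ip (sdpMat A i) M = -(p i)} =
          {M | ip (sdpMat A i) M = -(p i)} := by
        ext M
        simp [hi]
      rw [this]
      exact isClosed_eq (continuous_ip _) continuous_const
  -- minimizer of tr(B M) over F
  obtain ⟨M₁, hM₁F, hM₁min⟩ := exists_minimizer hA F hFclosed
    (fun M hM => hM.1) ⟨Matrix.diagonal d, hMdfeas⟩
  have hM₁feas : Feasible A p M₁ := hM₁F
  -- band completion of M₁
  obtain ⟨v, hv⟩ := band_completion hr M₁ hM₁feas.1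
  obtain ⟨M₀, hM₀ent, hM₀psd, hM₀rank⟩ := gram_psd_rank v
  have hband : ∀ k l : Fin (n + 1), |(k : ℤ) - (l : ℤ)| < r → M₁ k l = M₀ k l := by
    intro k l h
    rw [hM₀ent, ← hv k l h]
  have hipeq : ∀ i, ip (sdpMat A i) M₁ = ip (sdpMat A i) M₀ :=
    ip_sdpMat_congr A M₁ M₀ hdiag hband
  have hM₀feas : Feasible A p M₀ :=
    ⟨hM₀psd, fun i hi => by rw [← hipeq i]; exact hM₁feas.2 i hi⟩
  refine ⟨M₀, hM₀feas, hM₀rank, fun M hMfeas => ?_⟩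
  -- express the objective via the trace of B * M
  have hobj : ∀ N, Feasible A p N → ip (sdpMat A (Fin.last n)) N
      = -(((-(A + Aᵀ)) * N).trace) + ∑ i ∈ Finset.univ.erase (Fin.last n), p i := by
    intro N hN
    have hsum := sum_ip_sdpMat A N
    rw [← Finset.add_sum_erase _ _ (Finset.mem_univ (Fin.last n))] at hsum
    have herase : ∑ i ∈ Finset.univ.erase (Fin.last n), ip (sdpMat A i) N
        = ∑ i ∈ Finset.univ.erase (Fin.last n), -(p i) := by
      refine Finset.sum_congr rfl fun i hi => ?_
      exact hN.2 i (Finset.ne_of_mem_erase hi)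
    rw [herase] at hsum
    have hBtr : ((-(A + Aᵀ)) * N).trace = -(((A + Aᵀ) * N).trace) := by
      rw [Matrix.neg_mul, Matrix.trace_neg]
    rw [hBtr, Finset.sum_neg_distrib] at *
    linarith [hsum]
  rw [hobj M hMfeas, hobj M₀ hM₀feas]
  have htr01 : ((-(A + Aᵀ)) * M₀).trace = ((-(A + Aᵀ)) * M₁).trace := by
    rw [Matrix.neg_mul, Matrix.trace_neg, Matrix.neg_mul, Matrix.trace_neg]
    rw [← sum_ip_sdpMat A M₀, ← sum_ip_sdpMat A M₁]
    rw [Finset.sum_congr rfl fun i _ => hipeq i]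
  rw [htr01]
  have := hM₁min M hMfeas
  linarith
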